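/- The limits of the Prüfer angle at infinity are lim_{E → −∞} φ_{N+1}(E) = −(2N − 1)π/2 and lim_{E → +∞} φ_{N+1}(E) = π/2. Consequently (by continuity and strict monotonicity of φ_{N+1}) the equation φ_{N+1}(E) ∈ πℤ has exactly N distinct real solutions, i.e., the Dirichlet Hamiltonian H has exactly N distinct (simple) eigenvalues. -/

import Mathlib

open Filter

/-- One step of the Prüfer angle recursion: if `φ = kπ` (i.e. `sin φ = 0`) the next
angle is `(k − 1/2)π = φ − π/2`; otherwise, with `k = ⌊φ/π⌋` the unique integer with
`kπ < φ < (k+1)π`, the next angle is `arctan(E − e − cot φ) + kπ`. -/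
noncomputable def pruferStep (e E φ : ℝ) : ℝ :=
  if Real.sin φ = 0 then φ - Real.pi / 2
  else Real.arctan (E - e - Real.cos φ / Real.sin φ) + Real.pi * ((⌊φ / Real.pi⌋ : ℤ) : ℝ)

noncomputable def prufer (ε : ℕ → ℝ) (E : ℝ) : ℕ → ℝ
  | 0 => Real.pi / 2
  | 1 => Real.pi / 2
  | n + 2 => pruferStep (ε (n + 1)) E (prufer ε E (n + 1))

/-- The Dirichlet solution: `u 0 = 0`, `u 1 = 1`, `u (n+2) = (E - ε (n+1)) u (n+1) - u n`. -/
noncomputable def usol (ε : ℕ → ℝ) (E : ℝ) : ℕ → ℝ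
  | 0 => 0
  | 1 => 1
  | n + 2 => (E - ε (n + 1)) * usol ε E (n + 1) - usol ε E n

lemma usol_pair_ne_zero (ε : ℕ → ℝ) (E : ℝ) :
    ∀ n, usol ε E n ≠ 0 ∨ usol ε E (n + 1) ≠ 0 := by
  intro n
  induction n with
  | zero => right; simp [usol]
  | succ m ih =>
    by_cases h : usol ε E (m + 1) = 0
    · rcases ih with h' | h'
      · right
        show usol ε E (m + 2) ≠ 0
        simp only [usol, h, mul_zero, zero_sub, ne_eq, neg_eq_zero]
        exact h'
      · exact absurd h h'
    · left; exact h

/-- The key invariant relating Prüfer angles to the Dirichlet solution. -/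
lemma prufer_usol (ε : ℕ → ℝ) (E : ℝ) :
    ∀ n : ℕ, (Real.sin (prufer ε E (n + 1)) = 0 ↔ usol ε E (n + 1) = 0) ∧
      usol ε E n * Real.sin (prufer ε E (n + 1)) =
        usol ε E (n + 1) * Real.cos (prufer ε E (n + 1)) := by
  intro n
  induction n with
  | zero =>
    constructor
    · simp [prufer, usol]
    · simp [prufer, usol]
  | succ m ih =>
    obtain ⟨ih1, ih2⟩ := ih
    have hφ : prufer ε E (m + 2) = pruferStep (ε (m + 1)) E (prufer ε E (m + 1)) := rfl
    have hu : usol ε E (m + 2) = (E - ε (m + 1)) * usol ε E (m + 1) - usol ε E m := rfl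
    by_cases hs : Real.sin (prufer ε E (m + 1)) = 0
    · -- sin = 0 branch
      have hu1 : usol ε E (m + 1) = 0 := ih1.mp hs
      have hum : usol ε E m ≠ 0 := by
        rcases usol_pair_ne_zero ε E m with h | h
        · exact h
        · exact absurd hu1 h
      have hφ2 : prufer ε E (m + 2) = prufer ε E (m + 1) - Real.pi / 2 := by
        rw [hφ, pruferStep, if_pos hs]
      have hcos : Real.cos (prufer ε E (m + 1)) ≠ 0 := by
        intro h
        have := Real.sin_sq_add_cos_sq (prufer ε E (m + 1))
        rw [hs, h] at this; norm_num at this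
      have hsin2 : Real.sin (prufer ε E (m + 2)) = -Real.cos (prufer ε E (m + 1)) := by
        rw [hφ2, Real.sin_sub, Real.sin_pi_div_two, Real.cos_pi_div_two]
        ring_nf
      have hcos2 : Real.cos (prufer ε E (m + 2)) = Real.sin (prufer ε E (m + 1)) := by
        rw [hφ2, Real.cos_sub, Real.sin_pi_div_two, Real.cos_pi_div_two]
        ring_nf
      have hu2 : usol ε E (m + 2) = -usol ε E m := by rw [hu, hu1]; ring
      refine ⟨?_, ?_⟩
      · rw [hsin2, hu2]
        simp only [neg_eq_zero]
        constructor
        · intro h; exact absurd h hcos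
        · intro h; exact absurd h hum
      · rw [hsin2, hcos2, hs, hu1, hu2]; ring
    · -- sin ≠ 0 branch
      have hu1 : usol ε E (m + 1) ≠ 0 := fun h => hs (ih1.mpr h)
      set t : ℝ := E - ε (m + 1) - Real.cos (prufer ε E (m + 1)) / Real.sin (prufer ε E (m + 1))
        with ht
      have hφ2 : prufer ε E (m + 2) =
          Real.arctan t + Real.pi * ((⌊prufer ε E (m + 1) / Real.pi⌋ : ℤ) : ℝ) := by
        rw [hφ, pruferStep, if_neg hs]
      set k : ℤ := ⌊prufer ε E (m + 1) / Real.pi⌋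
      set c : ℝ := Real.cos ((k : ℝ) * Real.pi) with hc
      have hc2 : c ≠ 0 := by
        have := Real.abs_cos_int_mul_pi k
        intro h; rw [← hc] at this; rw [h] at this; norm_num at this
      have hsin2 : Real.sin (prufer ε E (m + 2)) = Real.sin (Real.arctan t) * c := by
        rw [hφ2, mul_comm Real.pi, Real.sin_add, Real.sin_int_mul_pi]
        ring
      have hcos2 : Real.cos (prufer ε E (m + 2)) = Real.cos (Real.arctan t) * c := by
        rw [hφ2, mul_comm Real.pi, Real.cos_add, Real.sin_int_mul_pi]
        ring
      -- t * u_{m+1} = u_{m+2}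
      have htu : t * usol ε E (m + 1) = usol ε E (m + 2) := by
        rw [ht, hu]
        field_simp
        linear_combination ih2
      have hsq : Real.sqrt (1 + t ^ 2) ≠ 0 := by
        positivity
      refine ⟨?_, ?_⟩
      · rw [hsin2, Real.sin_arctan]
        constructor
        · intro h
          have : t = 0 := by
            rcases mul_eq_zero.mp h with h' | h'
            · have := div_eq_zero_iff.mp h'
              rcases this with h'' | h''
              · exact h''
              · exact absurd h'' hsq
            · exact absurd h' hc2
          rw [← htu, this, zero_mul]
        · intro h
          have ht0 : t = 0 := by
            have := htu
            rw [h] at this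
            rcases mul_eq_zero.mp this with h' | h'
            · exact h'
            · exact absurd h' hu1
          rw [ht0]; simp
      · rw [hsin2, hcos2, Real.sin_arctan, Real.cos_arctan]
        rw [← htu]
        field_simp


/-- The Dirichlet Hamiltonian: the `N × N` symmetric tridiagonal matrix with diagonal
entries `ε_n` and off-diagonal entries `1`. -/
def dirichletH (N : ℕ) (ε : Fin N → ℝ) : Matrix (Fin N) (Fin N) ℝ :=
  fun i j =>
    if i = j then ε i
    else if i.val + 1 = j.val ∨ j.val + 1 = i.val then 1 else 0

section PolyCount
open Polynomial

noncomputable def pruferPoly (e : ℕ → ℝ) : ℕ → Polynomial ℝ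
  | 0 => 0
  | 1 => 1
  | n + 2 => (X - C (e (n + 1))) * pruferPoly e (n + 1) - pruferPoly e n

lemma pruferPoly_eval (e : ℕ → ℝ) (E : ℝ) : ∀ n, (pruferPoly e n).eval E = usol e E n
  | 0 => by simp [pruferPoly, usol]
  | 1 => by simp [pruferPoly, usol]
  | n + 2 => by
      simp [pruferPoly, usol, pruferPoly_eval e E n, pruferPoly_eval e E (n + 1)]

lemma pruferPoly_monic_deg (e : ℕ → ℝ) :
    ∀ n, (pruferPoly e (n + 1)).Monic ∧ (pruferPoly e (n + 1)).degree = n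
  | 0 => by simp [pruferPoly, monic_one]
  | n + 1 => by
      obtain ⟨hm, hd⟩ := pruferPoly_monic_deg e n
      have hmul : ((X - C (e (n + 1))) * pruferPoly e (n + 1)).Monic :=
        (monic_X_sub_C _).mul hm
      have hdmul : ((X - C (e (n + 1))) * pruferPoly e (n + 1)).degree = ((n : WithBot ℕ) + 1) := by
        rw [degree_mul, degree_X_sub_C, hd]
        rw [add_comm]
      have hlt : (pruferPoly e n).degree < ((X - C (e (n + 1))) * pruferPoly e (n + 1)).degree := by
        rw [hdmul]
        match n with
        | 0 => simp [pruferPoly]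
        | m + 1 =>
          rw [(pruferPoly_monic_deg e m).2]
          exact_mod_cast Nat.lt_succ_of_lt (Nat.lt_succ_self m)
      refine ⟨hmul.sub_of_left hlt, ?_⟩
      rw [show pruferPoly e (n + 2) = _ - _ from rfl,
        degree_sub_eq_left_of_degree_lt hlt, hdmul]
      push_cast
      ring

lemma usol_root_finite (e : ℕ → ℝ) (n : ℕ) : {E : ℝ | usol e E (n + 1) = 0}.Finite ∧
    {E : ℝ | usol e E (n + 1) = 0}.ncard ≤ n := by
  obtain ⟨hm, hd⟩ := pruferPoly_monic_deg e n
  have hne : pruferPoly e (n + 1) ≠ 0 := hm.ne_zero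
  have hset : {E : ℝ | usol e E (n + 1) = 0} = ↑((pruferPoly e (n + 1)).roots.toFinset) := by
    ext E
    simp [Multiset.mem_toFinset, mem_roots, hne, IsRoot, pruferPoly_eval]
  rw [hset]
  refine ⟨(Multiset.toFinset _).finite_toSet, ?_⟩
  rw [Set.ncard_coe_finset]
  calc (Multiset.toFinset (pruferPoly e (n+1)).roots).card
      ≤ Multiset.card (pruferPoly e (n + 1)).roots := Multiset.toFinset_card_le _
    _ ≤ (pruferPoly e (n + 1)).natDegree := card_roots' _
    _ = n := natDegree_eq_of_degree_eq_some hd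

end PolyCount

/-- Extension of a vector on `Fin N` to `ℕ`, shifted by one and padded with zeros. -/
def extv (N : ℕ) (v : Fin N → ℝ) (n : ℕ) : ℝ :=
  if h : 1 ≤ n ∧ n ≤ N then v ⟨n - 1, by omega⟩ else 0

lemma extv_succ (N : ℕ) (v : Fin N → ℝ) (i : Fin N) : extv N v (i.val + 1) = v i := by
  have h : 1 ≤ i.val + 1 ∧ i.val + 1 ≤ N := ⟨by omega, i.isLt⟩
  rw [extv, dif_pos h]
  congr

lemma extv_zero (N : ℕ) (v : Fin N → ℝ) : extv N v 0 = 0 := by simp [extv]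

lemma extv_top (N : ℕ) (v : Fin N → ℝ) : extv N v (N + 1) = 0 := by
  rw [extv, dif_neg]; omega

lemma mulVec_dirichletH (N : ℕ) (d : Fin N → ℝ) (v : Fin N → ℝ) (i : Fin N) :
    (dirichletH N d).mulVec v i = extv N v i.val + d i * v i + extv N v (i.val + 2) := by
  have hi := i.isLt
  have key : ∀ j : Fin N, dirichletH N d i j * v j =
      (if j = i then d i * v i else 0) +
        ((if j.val + 1 = i.val then v j else 0) + (if j.val = i.val + 1 then v j else 0)) := by
    intro j
    have hj := j.isLt
    simp only [dirichletH]
    rcases eq_or_ne j i with rfl | hne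
    · rw [if_pos rfl, if_pos rfl, if_neg (by omega), if_neg (by omega)]; ring
    · rw [if_neg (fun h => hne h.symm), if_neg hne]
      by_cases h2 : i.val + 1 = j.val
      · rw [if_pos (Or.inl h2), if_neg (by omega), if_pos (by omega)]; ring
      · by_cases h3 : j.val + 1 = i.val
        · rw [if_pos (Or.inr h3), if_pos h3, if_neg (by omega)]; ring
        · rw [if_neg (by tauto), if_neg h3, if_neg (by omega)]; ring
  have hmv : (dirichletH N d).mulVec v i = ∑ j : Fin N, dirichletH N d i j * v j := rfl
  have h1 : (∑ j : Fin N, if j = i then d i * v i else 0) = d i * v i := by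
    rw [Finset.sum_ite_eq' Finset.univ i]
    simp
  have h2 : (∑ j : Fin N, if j.val + 1 = i.val then v j else 0) = extv N v i.val := by
    by_cases h : 1 ≤ i.val
    · have hlt : i.val - 1 < N := by omega
      have hcong : ∀ j : Fin N, (if j.val + 1 = i.val then v j else 0)
          = (if j = ⟨i.val - 1, hlt⟩ then v j else 0) := by
        intro j
        have : (j.val + 1 = i.val) ↔ (j = ⟨i.val - 1, hlt⟩) := by
          rw [Fin.ext_iff]
          simp only []
          omega
        simp only [this]
      rw [Finset.sum_congr rfl (fun j _ => hcong j), Finset.sum_ite_eq' Finset.univ]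
      simp only [Finset.mem_univ, if_true]
      rw [extv, dif_pos ⟨h, by omega⟩]
    · rw [Finset.sum_eq_zero (fun j _ => by rw [if_neg (by omega)]), extv, dif_neg (by omega)]
  have h3 : (∑ j : Fin N, if j.val = i.val + 1 then v j else 0) = extv N v (i.val + 2) := by
    by_cases h : i.val + 1 < N
    · have hcong : ∀ j : Fin N, (if j.val = i.val + 1 then v j else 0)
          = (if j = ⟨i.val + 1, h⟩ then v j else 0) := by
        intro j
        have : (j.val = i.val + 1) ↔ (j = ⟨i.val + 1, h⟩) := by
          rw [Fin.ext_iff]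
        simp only [this]
      rw [Finset.sum_congr rfl (fun j _ => hcong j), Finset.sum_ite_eq' Finset.univ]
      simp only [Finset.mem_univ, if_true]
      rw [extv, dif_pos ⟨by omega, by omega⟩]
      congr 1
    · rw [Finset.sum_eq_zero (fun j _ => by
        rw [if_neg (by have := j.isLt; omega)]), extv, dif_neg (by omega)]
  rw [hmv, Finset.sum_congr rfl (fun j _ => key j), Finset.sum_add_distrib,
    Finset.sum_add_distrib, h1, h2, h3]
  ring

/-- Any eigenvector is proportional to the Dirichlet solution. -/
lemma eigen_scale {N : ℕ} (hN : 0 < N) (e : ℕ → ℝ) (E : ℝ) (v : Fin N → ℝ)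
    (hv : (dirichletH N (fun i => e (i.val + 1))).mulVec v = E • v) :
    (∀ n, n ≤ N + 1 → extv N v n = v ⟨0, hN⟩ * usol e E n) := by
  set w := extv N v with hw
  have hrec : ∀ n, n < N → w (n + 2) = (E - e (n + 1)) * w (n + 1) - w n := by
    intro n hn
    have := congrFun hv ⟨n, hn⟩
    rw [mulVec_dirichletH] at this
    have hsucc : w (n + 1) = v ⟨n, hn⟩ := extv_succ N v ⟨n, hn⟩
    simp only [Pi.smul_apply, smul_eq_mul] at this
    rw [← hsucc] at this
    linarith [this]
  have hw1 : w 1 = v ⟨0, hN⟩ := extv_succ N v ⟨0, hN⟩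
  intro n
  induction n using Nat.strong_induction_on with
  | _ n ih =>
    match n with
    | 0 => intro _; simp [extv_zero, usol, hw]
    | 1 => intro _; simp [hw1, usol]
    | m + 2 =>
      intro hle
      rw [hrec m (by omega), ih (m + 1) (by omega) (by omega), ih m (by omega) (by omega)]
      show _ = v ⟨0, hN⟩ * ((E - e (m + 1)) * usol e E (m + 1) - usol e E m)
      ring

/-- `E` is an eigenvalue of the Dirichlet Hamiltonian iff `usol e E (N+1) = 0`. -/
lemma eigen_iff {N : ℕ} (hN : 0 < N) (e : ℕ → ℝ) (E : ℝ) :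
    (∃ v : Fin N → ℝ, v ≠ 0 ∧ (dirichletH N (fun i => e (i.val + 1))).mulVec v = E • v) ↔
      usol e E (N + 1) = 0 := by
  constructor
  · rintro ⟨v, hv0, hv⟩
    have hscale := eigen_scale hN e E v hv
    have hv00 : v ⟨0, hN⟩ ≠ 0 := by
      intro h0
      apply hv0
      funext i
      have := hscale (i.val + 1) (by omega)
      rw [extv_succ, h0, zero_mul] at this
      exact this
    have := hscale (N + 1) le_rfl
    rw [extv_top] at this
    exact (mul_eq_zero.mp this.symm).resolve_left hv00
  · intro hroot
    refine ⟨fun i => usol e E (i.val + 1), ?_, ?_⟩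
    · intro h
      have := congrFun h ⟨0, hN⟩
      simp [usol] at this
    · funext i
      rw [mulVec_dirichletH]
      have hx : ∀ n, n ≤ N + 1 → extv N (fun i : Fin N => usol e E (i.val + 1)) n
          = usol e E n := by
        intro n hn
        rcases Nat.eq_or_lt_of_le hn with h | h
        · rw [h, extv_top, hroot]
        · match n with
          | 0 => rw [extv_zero]; simp [usol]
          | m + 1 =>
            have : m < N := by omega
            exact extv_succ N _ ⟨m, this⟩
      rw [hx i.val (by omega), hx (i.val + 2) (by have := i.isLt; omega)]
      show usol e E i.val + e (i.val + 1) * usol e E (i.val + 1) + usol e E (i.val + 2)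
          = E * usol e E (i.val + 1)
      show usol e E i.val + e (i.val + 1) * usol e E (i.val + 1) +
        ((E - e (i.val + 1)) * usol e E (i.val + 1) - usol e E i.val) = _
      ring

lemma dirichletH_isHermitian (N : ℕ) (d : Fin N → ℝ) : (dirichletH N d).IsHermitian := by
  unfold Matrix.IsHermitian
  ext i j
  simp only [Matrix.conjTranspose_apply, dirichletH, star_trivial]
  rcases eq_or_ne i j with rfl | hne
  · simp
  · rw [if_neg (fun h => hne h.symm), if_neg hne]
    by_cases h : i.val + 1 = j.val ∨ j.val + 1 = i.val
    · rw [if_pos (by tauto), if_pos h]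
    · rw [if_neg (by tauto), if_neg h]

open scoped RealInnerProductSpace in
lemma eigen_ncard_ge {N : ℕ} (hN : 0 < N) (e : ℕ → ℝ)
    (hfin : {E : ℝ | ∃ v : Fin N → ℝ, v ≠ 0 ∧
      (dirichletH N (fun i => e (i.val + 1))).mulVec v = E • v}.Finite) :
    N ≤ {E : ℝ | ∃ v : Fin N → ℝ, v ≠ 0 ∧
      (dirichletH N (fun i => e (i.val + 1))).mulVec v = E • v}.ncard := by
  set S := {E : ℝ | ∃ v : Fin N → ℝ, v ≠ 0 ∧
      (dirichletH N (fun i => e (i.val + 1))).mulVec v = E • v} with hS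
  have hA := dirichletH_isHermitian N (fun i => e (i.val + 1))
  set B := hA.eigenvectorBasis with hB
  have hBn : ∀ i, (B i : Fin N → ℝ) ≠ 0 := by
    intro i h
    exact hA.eigenvectorBasis.orthonormal.ne_zero i (by ext x; exact congrFun h x)
  have hmem : ∀ i, hA.eigenvalues i ∈ S := by
    intro i
    exact ⟨B i, hBn i, hA.mulVec_eigenvectorBasis i⟩
  have hinj : Function.Injective hA.eigenvalues := by
    intro i j hij
    by_contra hne
    set v : EuclideanSpace ℝ (Fin N) := B i with hv
    set w : EuclideanSpace ℝ (Fin N) := B j with hwdef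
    have hvi : (dirichletH N (fun i => e (i.val + 1))).mulVec v = hA.eigenvalues i • v :=
      hA.mulVec_eigenvectorBasis i
    have hwi : (dirichletH N (fun i => e (i.val + 1))).mulVec w = hA.eigenvalues i • w := by
      rw [hij] at *
      exact hA.mulVec_eigenvectorBasis j
    have hvw : ⟪v, w⟫ = 0 := hA.eigenvectorBasis.orthonormal.2 hne
    have hwv : ⟪w, v⟫ = 0 := by rw [real_inner_comm]; exact hvw
    have hvv : ⟪v, v⟫ = 1 := by
      rw [real_inner_self_eq_norm_sq, hA.eigenvectorBasis.orthonormal.1 i]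
      norm_num
    have hww : ⟪w, w⟫ = 1 := by
      rw [real_inner_self_eq_norm_sq, hA.eigenvectorBasis.orthonormal.1 j]
      norm_num
    -- the combination z has zero first component, hence vanishes identically
    set z : Fin N → ℝ := w ⟨0, hN⟩ • (v : Fin N → ℝ) - v ⟨0, hN⟩ • (w : Fin N → ℝ) with hz
    have hzeig : (dirichletH N (fun i => e (i.val + 1))).mulVec z = hA.eigenvalues i • z := by
      rw [hz, Matrix.mulVec_sub, Matrix.mulVec_smul, Matrix.mulVec_smul, hvi, hwi]
      rw [smul_sub]
      rw [smul_comm (w ⟨0, hN⟩), smul_comm (v ⟨0, hN⟩)]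
    have hz0 : z ⟨0, hN⟩ = 0 := by
      simp only [hz, PiLp.sub_apply, PiLp.smul_apply, Pi.sub_apply, Pi.smul_apply, smul_eq_mul]
      ring
    have hzzero : ∀ x : Fin N, z x = 0 := by
      intro x
      have h1 := eigen_scale hN e (hA.eigenvalues i) z hzeig (x.val + 1) (by have := x.isLt; omega)
      rw [extv_succ, hz0, zero_mul] at h1
      exact h1
    have hpt : w ⟨0, hN⟩ • v = v ⟨0, hN⟩ • w := by
      ext x
      have := hzzero x
      simp only [hz, PiLp.sub_apply, PiLp.smul_apply, Pi.sub_apply, Pi.smul_apply, smul_eq_mul] at this ⊢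
      linarith
    have hw0 : w ⟨0, hN⟩ = 0 := by
      have h1 : ⟪w ⟨0, hN⟩ • v, v⟫ = ⟪v ⟨0, hN⟩ • w, v⟫ := by rw [hpt]
      rw [real_inner_smul_left, real_inner_smul_left, hvv, hwv] at h1
      simpa using h1
    have hv0 : v ⟨0, hN⟩ = 0 := by
      have h1 : ⟪w ⟨0, hN⟩ • v, w⟫ = ⟪v ⟨0, hN⟩ • w, w⟫ := by rw [hpt]
      rw [real_inner_smul_left, real_inner_smul_left, hww, hvw] at h1
      simpa using h1.symm
    -- then v itself vanishes, contradiction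
    apply hBn i
    funext x
    have h1 := eigen_scale hN e (hA.eigenvalues i) v hvi (x.val + 1) (by have := x.isLt; omega)
    rw [extv_succ, hv0, zero_mul] at h1
    exact h1
  have hsub : Set.range hA.eigenvalues ⊆ S := by
    rintro _ ⟨i, rfl⟩
    exact hmem i
  have : (Set.range hA.eigenvalues).ncard = N := by
    rw [← Set.image_univ, Set.ncard_image_of_injective _ hinj]
    simp [Set.ncard_univ]
  rw [← this]
  exact Set.ncard_le_ncard hsub hfin

lemma prufer_succ (ε : ℕ → ℝ) (E : ℝ) {n : ℕ} (hn : 1 ≤ n) :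
    prufer ε E (n + 1) = pruferStep (ε n) E (prufer ε E n) := by
  obtain ⟨m, rfl⟩ := Nat.exists_eq_succ_of_ne_zero (show n ≠ 0 by omega)
  rfl

lemma floor_odd_half_pi (k : ℤ) : ⌊((2 * (k : ℝ) + 1) * Real.pi / 2) / Real.pi⌋ = k := by
  have h : ((2 * (k : ℝ) + 1) * Real.pi / 2) / Real.pi = (k : ℝ) + 1 / 2 := by
    field_simp [Real.pi_ne_zero]
  rw [h]
  rw [show ((k : ℝ) + 1 / 2) = ((k : ℤ) : ℝ) + (1 / 2 : ℝ) by norm_num]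
  rw [Int.floor_intCast_add]
  norm_num

/-- Near a half-integer multiple of `π`, sin does not vanish and the floor is constant. -/
lemma near_half (k : ℤ) (x : ℝ) (hx : |x - (2 * (k : ℝ) + 1) * Real.pi / 2| < Real.pi / 4) :
    Real.sin x ≠ 0 ∧ ⌊x / Real.pi⌋ = k := by
  have hpi := Real.pi_pos
  set c : ℝ := (2 * (k : ℝ) + 1) * Real.pi / 2 with hc
  have h1 : (k : ℝ) * Real.pi + Real.pi / 4 < x := by
    rw [abs_lt] at hx
    have : c = (k : ℝ) * Real.pi + Real.pi / 2 := by rw [hc]; ring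
    linarith [hx.1, this ▸ hx.1]
  have h2 : x < (k : ℝ) * Real.pi + 3 * Real.pi / 4 := by
    rw [abs_lt] at hx
    have hce : c = (k : ℝ) * Real.pi + Real.pi / 2 := by rw [hc]; ring
    rw [hce] at hx
    linarith [hx.2]
  constructor
  · intro hs
    obtain ⟨m, hm⟩ := Real.sin_eq_zero_iff.mp hs
    -- x = m * π lies in (kπ + π/4, kπ + 3π/4): impossible
    rw [← hm] at h1 h2
    have hk1 : (k : ℝ) < m := by
      by_contra hle
      push_neg at hle
      have : (m : ℝ) ≤ k := by exact_mod_cast hle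
      nlinarith
    have hk2 : (m : ℝ) < k + 1 := by
      by_contra hle
      push_neg at hle
      nlinarith
    have : (k : ℤ) < m := by exact_mod_cast hk1
    have : (m : ℤ) < k + 1 := by exact_mod_cast hk2
    omega
  · apply Int.floor_eq_iff.mpr
    constructor
    · rw [le_div_iff₀ hpi]
      nlinarith
    · rw [div_lt_iff₀ hpi]
      push_cast
      nlinarith

lemma tendsto_cot_of_tendsto {l : Filter ℝ} {f : ℝ → ℝ} {c : ℝ} (hc : Real.cos c = 0)
    (h : Tendsto f l (nhds c)) :
    Tendsto (fun E => Real.cos (f E) / Real.sin (f E)) l (nhds 0) := by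
  have hs : Real.sin c ≠ 0 := by
    intro h0
    have := Real.sin_sq_add_cos_sq c
    rw [h0, hc] at this
    norm_num at this
  have h1 : Tendsto (fun E => Real.cos (f E)) l (nhds 0) := by
    rw [← hc]
    exact (Real.continuous_cos.tendsto c).comp h
  have h2 : Tendsto (fun E => Real.sin (f E)) l (nhds (Real.sin c)) :=
    (Real.continuous_sin.tendsto c).comp h
  have := h1.div h2 hs
  rw [zero_div] at this
  exact this

/-- Generic step lemma for the limit at `+∞`. -/
lemma prufer_step_tendsto_atTop (ε : ℕ → ℝ) {n : ℕ} (hn : 1 ≤ n) (k : ℤ)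
    (h : Tendsto (fun E => prufer ε E n) atTop (nhds ((2 * (k : ℝ) + 1) * Real.pi / 2))) :
    Tendsto (fun E => prufer ε E (n + 1)) atTop
      (nhds (Real.pi / 2 + Real.pi * (k : ℝ))) := by
  have hpi := Real.pi_pos
  set c : ℝ := (2 * (k : ℝ) + 1) * Real.pi / 2 with hc
  have hcos : Real.cos c = 0 := Real.cos_eq_zero_iff.mpr ⟨k, rfl⟩
  have hdist : ∀ᶠ E in atTop, |prufer ε E n - c| < Real.pi / 4 := by
    have := Metric.tendsto_nhds.mp h (Real.pi / 4) (by positivity)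
    simpa [Real.dist_eq] using this
  have hnear : ∀ᶠ E in atTop, Real.sin (prufer ε E n) ≠ 0 ∧ ⌊prufer ε E n / Real.pi⌋ = k :=
    hdist.mono fun E hE => near_half k _ hE
  have hcot : Tendsto (fun E => Real.cos (prufer ε E n) / Real.sin (prufer ε E n))
      atTop (nhds 0) := tendsto_cot_of_tendsto hcos h
  have hcotsmall : ∀ᶠ E in atTop,
      |Real.cos (prufer ε E n) / Real.sin (prufer ε E n)| < 1 := by
    have := Metric.tendsto_nhds.mp hcot 1 one_pos
    simpa [Real.dist_eq, abs_div] using this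
  have harg : Tendsto (fun E => E - ε n - Real.cos (prufer ε E n) / Real.sin (prufer ε E n))
      atTop atTop := by
    have hbase : Tendsto (fun E : ℝ => E - ε n - 1) atTop atTop := by
      refine (tendsto_atTop_add_const_right atTop (-ε n - 1) tendsto_id).congr fun E => ?_
      simp only [id]
      ring
    have : Tendsto (fun E : ℝ => (E - ε n - 1) +
        (1 - Real.cos (prufer ε E n) / Real.sin (prufer ε E n))) atTop atTop :=
      hbase.atTop_add_zero_eventuallyLE (hcotsmall.mono fun E hE => by
        have := abs_lt.mp hE
        show (0:ℝ) ≤ _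
        linarith [this.2])
    refine this.congr fun E => by ring
  have harctan : Tendsto (fun E => Real.arctan (E - ε n -
      Real.cos (prufer ε E n) / Real.sin (prufer ε E n))) atTop (nhds (Real.pi / 2)) :=
    (Real.tendsto_arctan_atTop.mono_right nhdsWithin_le_nhds).comp harg
  have hfinal : Tendsto (fun E => Real.arctan (E - ε n -
      Real.cos (prufer ε E n) / Real.sin (prufer ε E n)) + Real.pi * (k : ℝ)) atTop
      (nhds (Real.pi / 2 + Real.pi * (k : ℝ))) := harctan.add_const _
  refine hfinal.congr' ?_
  filter_upwards [hnear] with E hE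
  rw [prufer_succ ε E hn, pruferStep, if_neg hE.1, hE.2]

/-- Generic step lemma for the limit at `-∞`. -/
lemma prufer_step_tendsto_atBot (ε : ℕ → ℝ) {n : ℕ} (hn : 1 ≤ n) (k : ℤ)
    (h : Tendsto (fun E => prufer ε E n) atBot (nhds ((2 * (k : ℝ) + 1) * Real.pi / 2))) :
    Tendsto (fun E => prufer ε E (n + 1)) atBot
      (nhds (-(Real.pi / 2) + Real.pi * (k : ℝ))) := by
  have hpi := Real.pi_pos
  set c : ℝ := (2 * (k : ℝ) + 1) * Real.pi / 2 with hc
  have hcos : Real.cos c = 0 := Real.cos_eq_zero_iff.mpr ⟨k, rfl⟩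
  have hdist : ∀ᶠ E in atBot, |prufer ε E n - c| < Real.pi / 4 := by
    have := Metric.tendsto_nhds.mp h (Real.pi / 4) (by positivity)
    simpa [Real.dist_eq] using this
  have hnear : ∀ᶠ E in atBot, Real.sin (prufer ε E n) ≠ 0 ∧ ⌊prufer ε E n / Real.pi⌋ = k :=
    hdist.mono fun E hE => near_half k _ hE
  have hcot : Tendsto (fun E => Real.cos (prufer ε E n) / Real.sin (prufer ε E n))
      atBot (nhds 0) := tendsto_cot_of_tendsto hcos h
  have hcotsmall : ∀ᶠ E in atBot,
      |Real.cos (prufer ε E n) / Real.sin (prufer ε E n)| < 1 := by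
    have := Metric.tendsto_nhds.mp hcot 1 one_pos
    simpa [Real.dist_eq, abs_div] using this
  have harg : Tendsto (fun E => E - ε n - Real.cos (prufer ε E n) / Real.sin (prufer ε E n))
      atBot atBot := by
    have hbase : Tendsto (fun E : ℝ => E - ε n + 1) atBot atBot := by
      refine (tendsto_atBot_add_const_right atBot (-ε n + 1) tendsto_id).congr fun E => ?_
      simp only [id]
      ring
    have : Tendsto (fun E : ℝ => (E - ε n + 1) +
        (-1 - Real.cos (prufer ε E n) / Real.sin (prufer ε E n))) atBot atBot :=
      hbase.atBot_add_eventuallyLE_zero (hcotsmall.mono fun E hE => by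
        have := abs_lt.mp hE
        show _ ≤ (0:ℝ)
        linarith [this.1])
    refine this.congr fun E => by ring
  have harctan : Tendsto (fun E => Real.arctan (E - ε n -
      Real.cos (prufer ε E n) / Real.sin (prufer ε E n))) atBot (nhds (-(Real.pi / 2))) :=
    (Real.tendsto_arctan_atBot.mono_right nhdsWithin_le_nhds).comp harg
  have hfinal : Tendsto (fun E => Real.arctan (E - ε n -
      Real.cos (prufer ε E n) / Real.sin (prufer ε E n)) + Real.pi * (k : ℝ)) atBot
      (nhds (-(Real.pi / 2) + Real.pi * (k : ℝ))) := harctan.add_const _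
  refine hfinal.congr' ?_
  filter_upwards [hnear] with E hE
  rw [prufer_succ ε E hn, pruferStep, if_neg hE.1, hE.2]

lemma prufer_tendsto_atTop (ε : ℕ → ℝ) : ∀ n, 1 ≤ n →
    Tendsto (fun E => prufer ε E n) atTop (nhds (Real.pi / 2)) := by
  intro n hn
  induction n with
  | zero => omega
  | succ m ih =>
    rcases Nat.eq_or_lt_of_le hn with h | h
    · have : m = 0 := by omega
      subst this
      exact tendsto_const_nhds
    · have hm : 1 ≤ m := by omega
      have h0 : Real.pi / 2 = (2 * ((0 : ℤ) : ℝ) + 1) * Real.pi / 2 := by norm_num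
      have := prufer_step_tendsto_atTop ε hm 0 (by rw [← h0]; exact ih hm)
      simpa using this

lemma prufer_tendsto_atBot (ε : ℕ → ℝ) : ∀ n, 1 ≤ n →
    Tendsto (fun E => prufer ε E (n + 1)) atBot
      (nhds (-((2 * (n : ℝ) - 1) * Real.pi / 2))) := by
  intro n hn
  induction n, hn using Nat.le_induction with
  | base =>
    have h0 : Real.pi / 2 = (2 * ((0 : ℤ) : ℝ) + 1) * Real.pi / 2 := by norm_num
    have := prufer_step_tendsto_atBot ε (le_refl 1) 0 (by rw [← h0]; exact tendsto_const_nhds)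
    have heq : -(Real.pi / 2) + Real.pi * ((0 : ℤ) : ℝ) = -((2 * ((1 : ℕ) : ℝ) - 1) * Real.pi / 2) := by
      push_cast; ring
    rwa [heq] at this
  | succ m hm ih =>
    have hkey : -((2 * (m : ℝ) - 1) * Real.pi / 2) = (2 * ((-m : ℤ) : ℝ) + 1) * Real.pi / 2 := by
      push_cast; ring
    have := prufer_step_tendsto_atBot ε (show 1 ≤ m + 1 by omega) (-m) (by rw [← hkey]; exact ih)
    have heq : -(Real.pi / 2) + Real.pi * ((-m : ℤ) : ℝ)
        = -((2 * ((m + 1 : ℕ) : ℝ) - 1) * Real.pi / 2) := by push_cast; ring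
    rwa [heq] at this


/-- The limits of the Prüfer angle at infinity are
`lim_{E → −∞} φ_{N+1}(E) = −(2N − 1)π/2` and `lim_{E → +∞} φ_{N+1}(E) = π/2`.
Consequently the equation `φ_{N+1}(E) ∈ πℤ` has exactly `N` distinct real solutions,
i.e. the Dirichlet Hamiltonian has exactly `N` distinct eigenvalues. -/
theorem prufer_limits_and_eigenvalue_count
    (N : ℕ) (hN : 1 ≤ N) (W : ℝ) (hW : 0 ≤ W)
    (ε : ℕ → ℝ) (hε : ∀ n, 1 ≤ n → n ≤ N → ε n ∈ Set.Icc 0 W) :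
    Tendsto (fun E : ℝ => prufer ε E (N + 1)) atBot
      (nhds (-((2 * (N : ℝ) - 1) * Real.pi / 2))) ∧
    Tendsto (fun E : ℝ => prufer ε E (N + 1)) atTop (nhds (Real.pi / 2)) ∧
    {E : ℝ | ∃ k : ℤ, prufer ε E (N + 1) = k * Real.pi}.ncard = N ∧
    {E : ℝ | ∃ v : Fin N → ℝ, v ≠ 0 ∧
      (dirichletH N (fun i => ε (i.val + 1))).mulVec v = E • v}.ncard = N := by
  have hN0 : 0 < N := hN
  -- The two solution sets coincide with the root set of the Dirichlet solution.
  have hset1 : {E : ℝ | ∃ k : ℤ, prufer ε E (N + 1) = k * Real.pi}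
      = {E : ℝ | usol ε E (N + 1) = 0} := by
    ext E
    simp only [Set.mem_setOf_eq]
    rw [← (prufer_usol ε E N).1]
    rw [Real.sin_eq_zero_iff]
    constructor
    · rintro ⟨k, hk⟩; exact ⟨k, hk.symm⟩
    · rintro ⟨k, hk⟩; exact ⟨k, hk.symm⟩
  have hset2 : {E : ℝ | ∃ v : Fin N → ℝ, v ≠ 0 ∧
      (dirichletH N (fun i => ε (i.val + 1))).mulVec v = E • v}
      = {E : ℝ | usol ε E (N + 1) = 0} := by
    ext E
    simp only [Set.mem_setOf_eq]
    exact eigen_iff hN0 ε E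
  obtain ⟨hfin, hle⟩ := usol_root_finite ε N
  have hge := eigen_ncard_ge hN0 ε (by rw [hset2]; exact hfin)
  rw [hset2] at hge
  have hcard : {E : ℝ | usol ε E (N + 1) = 0}.ncard = N := le_antisymm hle hge
  refine ⟨prufer_tendsto_atBot ε N hN, prufer_tendsto_atTop ε (N + 1) (by omega), ?_, ?_⟩
  · rw [hset1]; exact hcard
  · rw [hset2]; exact hcard
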